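/- For λ1+1 ≠ λ2 and the one-parameter transformations T_{x,y,x1}(α2,α3,α4,α5) = (α2·e^y + α4·x1·e^y, α3·e^{λ1x+λ2y} + α5·x1·e^{λ1x+λ2y}, α4·e^{x+y}, α5·e^{(λ1+1)x+λ2y}), the quantity I(α) = (α2 − α3·α4/α5)·α4^{(1+λ1)/(λ2−λ1−1)}·α5^{−1/(λ2−λ1−1)} is invariant: I(T_{x,y,x1}(α)) = I(α) for all x, y, x1 ∈ ℝ and all α with α4 > 0 and α5 > 0. -/

import Mathlib

open Real

/-- The invariant `I(α) = (α2 - α3 α4/α5) · α4^{(1+λ1)/(λ2-λ1-1)} · α5^{-1/(λ2-λ1-1)}`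
is preserved by the transformations
`T_{x,y,x1}(α2,α3,α4,α5) = (α2 e^y + α4 x1 e^y, α3 e^{λ1x+λ2y} + α5 x1 e^{λ1x+λ2y},
α4 e^{x+y}, α5 e^{(λ1+1)x+λ2y})`. -/
theorem I_G4_invariant (lam1 lam2 : ℝ) (h : lam2 ≠ lam1 + 1) :
    ∀ x y x1 α2 α3 α4 α5 : ℝ, 0 < α4 → 0 < α5 →
      (α2 * exp y + α4 * x1 * exp y -
          (α3 * exp (lam1 * x + lam2 * y) + α5 * x1 * exp (lam1 * x + lam2 * y)) *
            (α4 * exp (x + y)) / (α5 * exp ((lam1 + 1) * x + lam2 * y))) *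
          (α4 * exp (x + y)) ^ ((1 + lam1) / (lam2 - lam1 - 1)) *
          (α5 * exp ((lam1 + 1) * x + lam2 * y)) ^ (-(1 / (lam2 - lam1 - 1)))
        = (α2 - α3 * α4 / α5) * α4 ^ ((1 + lam1) / (lam2 - lam1 - 1)) *
          α5 ^ (-(1 / (lam2 - lam1 - 1))) := by
  intro x y x1 α2 α3 α4 α5 h4 h5
  have hd : lam2 - lam1 - 1 ≠ 0 := by
    intro hh; apply h; linarith
  have h5' : α5 ≠ 0 := ne_of_gt h5
  have key : (α2 * exp y + α4 * x1 * exp y -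
      (α3 * exp (lam1 * x + lam2 * y) + α5 * x1 * exp (lam1 * x + lam2 * y)) *
        (α4 * exp (x + y)) / (α5 * exp ((lam1 + 1) * x + lam2 * y)))
      = (α2 - α3 * α4 / α5) * exp y := by
    have he : exp (lam1 * x + lam2 * y) * exp (x + y) =
        exp ((lam1 + 1) * x + lam2 * y) * exp y := by
      rw [← exp_add, ← exp_add]; ring_nf
    rw [show (α3 * exp (lam1 * x + lam2 * y) + α5 * x1 * exp (lam1 * x + lam2 * y)) *
        (α4 * exp (x + y)) = (α3 + α5 * x1) * α4 * (exp (lam1 * x + lam2 * y) * exp (x + y)) by ring,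
      he]
    field_simp
    ring
  rw [key, mul_rpow h4.le (exp_pos _).le, mul_rpow h5.le (exp_pos _).le,
    ← exp_mul, ← exp_mul]
  have hexp : exp y * exp ((x + y) * ((1 + lam1) / (lam2 - lam1 - 1))) *
      exp (((lam1 + 1) * x + lam2 * y) * (-(1 / (lam2 - lam1 - 1)))) = 1 := by
    rw [← exp_add, ← exp_add, exp_eq_one_iff]
    field_simp
    ring
  calc (α2 - α3 * α4 / α5) * exp y *
        (α4 ^ ((1 + lam1) / (lam2 - lam1 - 1)) * exp ((x + y) * ((1 + lam1) / (lam2 - lam1 - 1)))) *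
        (α5 ^ (-(1 / (lam2 - lam1 - 1))) * exp (((lam1 + 1) * x + lam2 * y) * (-(1 / (lam2 - lam1 - 1)))))
      = (α2 - α3 * α4 / α5) * α4 ^ ((1 + lam1) / (lam2 - lam1 - 1)) *
          α5 ^ (-(1 / (lam2 - lam1 - 1))) *
          (exp y * exp ((x + y) * ((1 + lam1) / (lam2 - lam1 - 1))) *
            exp (((lam1 + 1) * x + lam2 * y) * (-(1 / (lam2 - lam1 - 1))))) := by ring
    _ = _ := by rw [hexp, mul_one]
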